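/- Let g : ℝ → ℝ be continuously differentiable and increasing, and let a < b be real numbers. Then there exists g̃ ∈ C¹(ℝ) such that (i) g̃(s) = g(s) for all s ∈ [a,b]; (ii) g̃ is strictly increasing on (-∞, a] and on [b, +∞); and (iii) there exist positive constants c₁, c₂ with g̃(s)/s → c₁ as s → +∞ and g̃(s)/s → c₂ as s → -∞. -/

import Mathlib

open Real Filter Topology Set

lemma deriv_nonneg_of_monotone' {g : ℝ → ℝ} (hg : Differentiable ℝ g)
    (hmono : Monotone g) (x : ℝ) : 0 ≤ deriv g x := by
  have h := (hg x).hasDerivAt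
  rw [hasDerivAt_iff_tendsto_slope] at h
  have h' : Tendsto (slope g x) (𝓝[>] x) (𝓝 (deriv g x)) :=
    h.mono_left (nhdsWithin_mono x fun y hy => ne_of_gt hy)
  refine ge_of_tendsto h' ?_
  filter_upwards [self_mem_nhdsWithin] with y hy
  have : x < y := hy
  rw [slope_def_field]
  exact div_nonneg (by linarith [hmono this.le]) (by linarith)

/-- Lemma 2.1 of Wang–Zuo.
Let `g : ℝ → ℝ` be `C¹` and increasing, and let `a < b`.  Then there is `g̃ ∈ C¹(ℝ)`
agreeing with `g` on `[a,b]`, strictly increasing on `(-∞,a]` and on `[b,+∞)`, and with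
`g̃ s / s → c₁ > 0` as `s → +∞` and `g̃ s / s → c₂ > 0` as `s → -∞`. -/
theorem extension_of_increasing_function
    (g : ℝ → ℝ) (hg : ContDiff ℝ 1 g) (hmono : Monotone g)
    (a b : ℝ) (hab : a < b) :
    ∃ gt : ℝ → ℝ, ContDiff ℝ 1 gt ∧
      (∀ s ∈ Icc a b, gt s = g s) ∧
      StrictMonoOn gt (Iic a) ∧
      StrictMonoOn gt (Ici b) ∧
      ∃ c₁ c₂ : ℝ, 0 < c₁ ∧ 0 < c₂ ∧
        Tendsto (fun s => gt s / s) atTop (𝓝 c₁) ∧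
        Tendsto (fun s => gt s / s) atBot (𝓝 c₂) := by
  have hgdiff : Differentiable ℝ g := hg.differentiable one_ne_zero
  have hgderiv : Continuous (deriv g) := hg.continuous_deriv le_rfl
  have hderiv_nonneg : ∀ x, 0 ≤ deriv g x := deriv_nonneg_of_monotone' hgdiff hmono
  set d : ℝ → ℝ := fun t => max (max (a - t) (t - b)) 0 with hd
  set cl : ℝ → ℝ := fun t => max a (min t b) with hcl
  set ψ : ℝ → ℝ := fun t => deriv g (cl t) * exp (-(d t)) + (1 - exp (-(d t))) with hψ
  have hψcont : Continuous ψ := by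
    apply Continuous.add
    · exact (hgderiv.comp (by fun_prop)).mul (by fun_prop)
    · fun_prop
  -- values of ψ on the three regions
  have hψ_mid : ∀ t ∈ Icc a b, ψ t = deriv g t := by
    intro t ht
    have hd0 : d t = 0 := by
      simp only [hd]
      exact max_eq_right (max_le (by linarith [ht.1]) (by linarith [ht.2]))
    have hcl0 : cl t = t := by
      simp only [hcl]
      rw [min_eq_left ht.2, max_eq_right ht.1]
    simp [hψ, hd0, hcl0]
  have hψ_right : ∀ t, b ≤ t → ψ t = (deriv g b - 1) * exp (b - t) + 1 := by
    intro t ht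
    have hd0 : d t = t - b := by
      simp only [hd]
      rw [max_eq_right (show a - t ≤ t - b by linarith),
        max_eq_left (show (0:ℝ) ≤ t - b by linarith)]
    have hcl0 : cl t = b := by
      simp only [hcl]
      rw [min_eq_right ht, max_eq_right hab.le]
    simp only [hψ, hd0, hcl0]
    have : -(t - b) = b - t := by ring
    rw [this]; ring
  have hψ_left : ∀ t, t ≤ a → ψ t = (deriv g a - 1) * exp (t - a) + 1 := by
    intro t ht
    have hd0 : d t = a - t := by
      simp only [hd]
      rw [max_eq_left (show t - b ≤ a - t by linarith),
        max_eq_left (show (0:ℝ) ≤ a - t by linarith)]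
    have hcl0 : cl t = a := by
      simp only [hcl]
      rw [min_eq_left (by linarith), max_eq_left ht]
    simp only [hψ, hd0, hcl0]
    have : -(a - t) = t - a := by ring
    rw [this]; ring
  -- positivity of ψ off [a,b]
  have hψ_pos_right : ∀ t, b < t → 0 < ψ t := by
    intro t ht
    simp only [hψ]
    have h1 : d t = t - b := by
      simp only [hd]
      rw [max_eq_right (show a - t ≤ t - b by linarith),
        max_eq_left (show (0:ℝ) ≤ t - b by linarith)]
    rw [h1]
    have h2 : exp (-(t - b)) < 1 := exp_lt_one_iff.mpr (by linarith)
    have h3 : 0 ≤ deriv g (cl t) * exp (-(t - b)) :=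
      mul_nonneg (hderiv_nonneg _) (exp_pos _).le
    linarith
  have hψ_pos_left : ∀ t, t < a → 0 < ψ t := by
    intro t ht
    simp only [hψ]
    have h1 : d t = a - t := by
      simp only [hd]
      rw [max_eq_left (show t - b ≤ a - t by linarith),
        max_eq_left (show (0:ℝ) ≤ a - t by linarith)]
    rw [h1]
    have h2 : exp (-(a - t)) < 1 := exp_lt_one_iff.mpr (by linarith)
    have h3 : 0 ≤ deriv g (cl t) * exp (-(a - t)) :=
      mul_nonneg (hderiv_nonneg _) (exp_pos _).le
    linarith
  -- the extension
  set G : ℝ → ℝ := fun s => g a + ∫ t in a..s, ψ t with hG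
  have hGderiv : ∀ s, HasDerivAt G (ψ s) s := by
    intro s
    exact ((hψcont.integral_hasStrictDerivAt a s).hasDerivAt).const_add (g a)
  have hGdiff : Differentiable ℝ G := fun s => (hGderiv s).differentiableAt
  have hGderiv' : deriv G = ψ := funext fun s => (hGderiv s).deriv
  have hGcd : ContDiff ℝ 1 G := contDiff_one_iff_deriv.mpr ⟨hGdiff, hGderiv' ▸ hψcont⟩
  have hGeq : ∀ s ∈ Icc a b, G s = g s := by
    intro s hs
    have h1 : (∫ t in a..s, ψ t) = ∫ t in a..s, deriv g t := by
      apply intervalIntegral.integral_congr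
      intro t ht
      rw [uIcc_of_le hs.1] at ht
      exact hψ_mid t ⟨ht.1, le_trans ht.2 hs.2⟩
    have h2 : (∫ t in a..s, deriv g t) = g s - g a :=
      intervalIntegral.integral_deriv_eq_sub (fun x _ => hgdiff x)
        (hgderiv.intervalIntegrable a s)
    simp only [hG]; rw [h1, h2]; ring
  have hsplit : ∀ c s : ℝ, G s = G c + ∫ t in c..s, ψ t := by
    intro c s
    simp only [hG]
    rw [← intervalIntegral.integral_add_adjacent_intervals
      (hψcont.intervalIntegrable a c) (hψcont.intervalIntegrable c s)]
    ring
  -- strict monotonicity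
  have hmono1 : StrictMonoOn G (Iic a) := by
    apply strictMonoOn_of_deriv_pos (convex_Iic a) hGdiff.continuous.continuousOn
    intro x hx
    rw [interior_Iic] at hx
    rw [hGderiv']
    exact hψ_pos_left x hx
  have hmono2 : StrictMonoOn G (Ici b) := by
    apply strictMonoOn_of_deriv_pos (convex_Ici b) hGdiff.continuous.continuousOn
    intro x hx
    rw [interior_Ici] at hx
    rw [hGderiv']
    exact hψ_pos_right x hx
  refine ⟨G, hGcd, hGeq, hmono1, hmono2, 1, 1, one_pos, one_pos, ?_, ?_⟩
  -- atTop
  · set K := deriv g b with hK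
    have hform : ∀ s, b ≤ s → G s = G b + (s - b) + (K - 1) * (1 - exp (b - s)) := by
      intro s hs
      have hint : (∫ t in b..s, ψ t) =
          (fun t => t - (K - 1) * exp (b - t)) s - (fun t => t - (K - 1) * exp (b - t)) b := by
        apply intervalIntegral.integral_eq_sub_of_hasDerivAt
        · intro t ht
          rw [uIcc_of_le hs] at ht
          have h1 : HasDerivAt (fun t : ℝ => b - t) (-1) t := by
            simpa using (hasDerivAt_id t).const_sub b
          have h2 := (h1.exp.const_mul (K - 1))
          have h3 := (hasDerivAt_id t).sub h2
          convert h3 using 1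
          · rfl
          rw [hψ_right t ht.1]; ring
        · exact hψcont.intervalIntegrable b s
      rw [hsplit b s, hint]
      simp only [exp_zero, sub_self]
      ring
    have t1 : Tendsto (fun s : ℝ => (G b - b + (K - 1)) / s) atTop (𝓝 0) :=
      tendsto_const_nhds.div_atTop tendsto_id
    have hexp : Tendsto (fun s : ℝ => exp (b - s)) atTop (𝓝 0) := by
      apply tendsto_exp_atBot.comp
      exact (tendsto_atBot_add_const_left atTop b tendsto_neg_atTop_atBot).congr fun s => (sub_eq_add_neg b s).symm
    have t2 : Tendsto (fun s : ℝ => (K - 1) * exp (b - s) / s) atTop (𝓝 0) :=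
      ((hexp.const_mul (K - 1))).div_atTop tendsto_id
    have keylim : Tendsto (fun s : ℝ =>
        1 + (G b - b + (K - 1)) / s - (K - 1) * exp (b - s) / s) atTop (𝓝 1) := by
      have := ((tendsto_const_nhds : Tendsto (fun _ : ℝ => (1:ℝ)) atTop (𝓝 1)).add t1).sub t2
      simpa using this
    refine keylim.congr' ?_
    filter_upwards [eventually_ge_atTop b, eventually_gt_atTop (0 : ℝ)] with s hs hs0
    rw [hform s hs]
    field_simp
    ring
  -- atBot
  · set L := deriv g a with hL
    have hform : ∀ s, s ≤ a → G s = G a + (s - a) + (L - 1) * (exp (s - a) - 1) := by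
      intro s hs
      have hint : (∫ t in a..s, ψ t) =
          (fun t => t + (L - 1) * exp (t - a)) s - (fun t => t + (L - 1) * exp (t - a)) a := by
        apply intervalIntegral.integral_eq_sub_of_hasDerivAt
        · intro t ht
          rw [uIcc_of_ge hs] at ht
          have h1 : HasDerivAt (fun t : ℝ => t - a) 1 t := by
            simpa using (hasDerivAt_id t).sub_const a
          have h2 := (h1.exp.const_mul (L - 1))
          have h3 := (hasDerivAt_id t).add h2
          convert h3 using 1
          · rfl
          rw [hψ_left t ht.2]; ring
        · exact hψcont.intervalIntegrable a s
      rw [hsplit a s, hint]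
      simp only [exp_zero, sub_self]
      ring
    have hinvBot : Tendsto (fun s : ℝ => s⁻¹) atBot (𝓝 0) := by
      have h1 : Tendsto (fun s : ℝ => (-s)⁻¹) atBot (𝓝 (0:ℝ)) :=
        (tendsto_inv_atTop_zero (𝕜 := ℝ)).comp
          (tendsto_neg_atBot_atTop : Tendsto (fun s : ℝ => -s) atBot atTop)
      have h2 := h1.neg
      simpa [inv_neg] using h2
    have t1 : Tendsto (fun s : ℝ => (G a - a - (L - 1)) / s) atBot (𝓝 0) := by
      simpa [div_eq_mul_inv] using hinvBot.const_mul (G a - a - (L - 1))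
    have hexp : Tendsto (fun s : ℝ => exp (s - a)) atBot (𝓝 0) := by
      apply tendsto_exp_atBot.comp
      exact (tendsto_atBot_add_const_right atBot (-a) tendsto_id).congr fun s => (sub_eq_add_neg s a).symm
    have t2 : Tendsto (fun s : ℝ => (L - 1) * exp (s - a) / s) atBot (𝓝 0) := by
      have := (hexp.const_mul (L - 1)).mul hinvBot
      simpa [div_eq_mul_inv, mul_assoc] using this
    have keylim : Tendsto (fun s : ℝ =>
        1 + (G a - a - (L - 1)) / s + (L - 1) * exp (s - a) / s) atBot (𝓝 1) := by
      have := ((tendsto_const_nhds : Tendsto (fun _ : ℝ => (1:ℝ)) atBot (𝓝 1)).add t1).add t2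
      simpa using this
    refine keylim.congr' ?_
    filter_upwards [eventually_le_atBot a, eventually_lt_atBot (0 : ℝ)] with s hs hs0
    rw [hform s hs]
    have hs0' : s ≠ 0 := ne_of_lt hs0
    field_simp
    ring
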